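/- Let ℓ² = ℓ²(ℕ, ℂ) with standard orthonormal basis (e_n)_{n≥1}, let U ∈ L(ℓ²) be the operator determined by U e_{2n} = e_n and U e_{2n+1} = 0 for all n, and let K ∈ L(ℓ²) be the rank-one operator determined by K e_2 = −e_1 and K e_n = 0 for n ≠ 2. Then U is surjective with infinite-dimensional kernel (so U satisfies Caradus' condition (C)), K is compact, and U + K is not surjective: e_1 does not belong to the range of U + K. Hence the class of operators satisfying condition (C) is not invariant under compact perturbations. -/

import Mathlib

noncomputable section

/-- The standard orthonormal basis vector `e n` of `ℓ²(ℕ, ℂ)`. -/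
def e (n : ℕ) : lp (fun _ : ℕ => ℂ) 2 := lp.single 2 n 1

/-- Coordinate evaluation as a continuous linear functional on `ℓ²`. -/
def ev (m : ℕ) : lp (fun _ : ℕ => ℂ) 2 →L[ℂ] ℂ :=
  LinearMap.mkContinuous
    { toFun := fun x => x m
      map_add' := fun x y => by
        show (↑(x + y) : ∀ _ : ℕ, ℂ) m = _
        rw [lp.coeFn_add]; rfl
      map_smul' := fun c x => by
        show (↑(c • x) : ∀ _ : ℕ, ℂ) m = _
        rw [lp.coeFn_smul]; rfl }
    1 (fun x => by
      simpa using lp.norm_apply_le_norm (by norm_num : (2 : ENNReal) ≠ 0) x m)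

lemma ev_apply (m : ℕ) (x : lp (fun _ : ℕ => ℂ) 2) : ev m x = x m := rfl

lemma e_apply_self (n : ℕ) : (e n) n = 1 := lp.single_apply_self 2 n 1

lemma e_apply_ne {n m : ℕ} (h : m ≠ n) : (e n) m = 0 := lp.single_apply_ne 2 n 1 h

lemma expand (x : lp (fun _ : ℕ => ℂ) 2) : HasSum (fun k => x k • e k) x := by
  have h := lp.hasSum_single (by norm_num : (2 : ENNReal) ≠ ⊤) x
  have he : (fun k : ℕ => lp.single 2 k (x k)) = fun k => x k • e k := by
    funext k
    rw [e, ← lp.single_smul, smul_eq_mul, mul_one]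
  rwa [he] at h

lemma apply_expand (T : lp (fun _ : ℕ => ℂ) 2 →L[ℂ] lp (fun _ : ℕ => ℂ) 2)
    (x : lp (fun _ : ℕ => ℂ) 2) : HasSum (fun k => x k • T (e k)) (T x) := by
  simpa using (expand x).mapL T

theorem caradus_not_invariant_under_compact_perturbation
    (U K : lp (fun _ : ℕ => ℂ) 2 →L[ℂ] lp (fun _ : ℕ => ℂ) 2)
    (hU1 : ∀ n : ℕ, U (e (2 * n)) = e n)
    (hU2 : ∀ n : ℕ, U (e (2 * n + 1)) = 0)
    (hK1 : K (e 2) = -(e 1))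
    (hK2 : ∀ n : ℕ, n ≠ 2 → K (e n) = 0) :
    Function.Surjective U ∧
    ¬ FiniteDimensional ℂ (LinearMap.ker U.toLinearMap) ∧
    IsCompactOperator K ∧
    e 1 ∉ LinearMap.range (U + K).toLinearMap ∧
    ¬ Function.Surjective (U + K) := by
  have hinj : Function.Injective (fun n : ℕ => 2 * n) := fun a b h => by simp only at h; omega
  -- Formula for K
  have hKform : ∀ x : lp (fun _ : ℕ => ℂ) 2, K x = x 2 • (-(e 1)) := by
    intro x
    have h := apply_expand K x
    have h2 : HasSum (fun k => x k • K (e k)) (x 2 • (-(e 1))) := by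
      have h0 := hasSum_single (f := fun k => x k • K (e k)) 2
        (fun k hk => by show x k • K (e k) = 0; rw [hK2 k hk, smul_zero])
      simpa [hK1] using h0
    exact h.unique h2
  -- Coordinate formula for U
  have hUcoord : ∀ (x : lp (fun _ : ℕ => ℂ) 2) (m : ℕ), (U x) m = x (2 * m) := by
    intro x m
    have h := ((apply_expand U x).mapL (ev m))
    have h2 : HasSum (fun k => ev m (x k • U (e k))) (x (2 * m)) := by
      have hz : ∀ k ≠ 2 * m, ev m (x k • U (e k)) = 0 := by
        intro k hk
        rcases Nat.even_or_odd k with ⟨n, hn⟩ | ⟨n, hn⟩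
        · have : k = 2 * n := by omega
          subst this
          have hnm : n ≠ m := fun h => hk (by omega)
          show ev m (x (2 * n) • U (e (2 * n))) = 0
          rw [hU1 n, map_smul, ev_apply, e_apply_ne hnm.symm, smul_zero]
        · have : k = 2 * n + 1 := by omega
          subst this
          show ev m (x (2 * n + 1) • U (e (2 * n + 1))) = 0
          rw [hU2 n, smul_zero, map_zero]
      have := hasSum_single (f := fun k => ev m (x k • U (e k))) (2 * m) hz
      simpa [ev_apply, hU1 m, lp.coeFn_smul, e_apply_self, Pi.smul_apply] using this
    exact (h.unique h2) ▸ rfl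
  have hnr : e 1 ∉ LinearMap.range (U + K).toLinearMap := by
    rintro ⟨x, hx⟩
    have h1 : ((U + K) x) 1 = (0 : ℂ) := by
      have heq : (U + K) x = U x + K x := rfl
      rw [heq]
      have hca := lp.coeFn_add (U x) (K x)
      have happ : (U x + K x) 1 = (U x) 1 + (K x) 1 := by rw [hca]; rfl
      rw [happ, hUcoord x 1, hKform x]
      have hsm : ((x 2 • (-(e 1))) : lp (fun _ : ℕ => ℂ) 2) 1
          = x 2 • ((-(e 1)) : lp (fun _ : ℕ => ℂ) 2) 1 := by
        rw [lp.coeFn_smul]; rfl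
      rw [hsm]
      have hneg : ((-(e 1)) : lp (fun _ : ℕ => ℂ) 2) 1 = -((e 1) 1) := by
        rw [lp.coeFn_neg]; rfl
      rw [hneg, e_apply_self]
      simp [smul_eq_mul]
    rw [show (U + K) x = e 1 from hx, e_apply_self] at h1
    exact one_ne_zero h1
  refine ⟨?_, ?_, ?_, hnr, ?_⟩
  · -- Surjectivity of U
    intro y
    set g : ℕ → ℂ := fun k => if Even k then y (k / 2) else 0 with hg
    have hg0 : ∀ k ∉ Set.range (fun n : ℕ => 2 * n), g k = 0 := by
      intro k hk
      have : ¬ Even k := by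
        rintro ⟨n, hn⟩; exact hk ⟨n, by simp only; omega⟩
      simp [hg, this]
    have hmem : Memℓp g 2 := by
      apply memℓp_gen
      have hy : Summable (fun n : ℕ => ‖y n‖ ^ (2 : ENNReal).toReal) :=
        lp.memℓp y |>.summable (by norm_num)
      have := (hinj.summable_iff (f := fun k => ‖g k‖ ^ (2 : ENNReal).toReal)
        (fun k hk => by have h0 := hg0 k hk; simp [h0])).mp ?_
      · exact this
      · convert hy using 1
        funext n
        simp [hg, Nat.mul_div_cancel_left n (by norm_num : 0 < 2), Function.comp]
    refine ⟨⟨g, hmem⟩, ?_⟩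
    set x : lp (fun _ : ℕ => ℂ) 2 := ⟨g, hmem⟩ with hx
    have h1 : HasSum (fun k => x k • U (e k)) (U x) := apply_expand U x
    have h2 : HasSum (fun k => x k • U (e k)) y := by
      refine (hinj.hasSum_iff ?_).mp ?_
      · intro k hk
        have : x k = 0 := hg0 k hk
        rw [this, zero_smul]
      · have hcomp : ((fun k => x k • U (e k)) ∘ fun n : ℕ => 2 * n)
            = fun n => y n • e n := by
          funext n
          show x (2 * n) • U (e (2 * n)) = y n • e n
          have hxv : x (2 * n) = y n := by
            show g (2 * n) = y n
            simp [hg, Nat.mul_div_cancel_left n (by norm_num : 0 < 2)]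
          rw [hxv, hU1 n]
        show HasSum ((fun k => x k • U (e k)) ∘ fun n : ℕ => 2 * n) y
        rw [hcomp]
        exact expand y
    exact h1.unique h2
  · -- Kernel infinite-dimensional
    intro hfd
    have hli : LinearIndependent ℂ e := by
      rw [linearIndependent_iff']
      intro s c hsum i hi
      have := congrArg (ev i) hsum
      rw [map_sum, map_zero] at this
      rw [Finset.sum_eq_single i (fun j _ hj => by
        rw [map_smul, ev_apply, e_apply_ne (Ne.symm hj), smul_zero])
        (fun h => absurd hi h)] at this
      simpa [ev_apply, e_apply_self] using this
    have hodd : Function.Injective (fun n : ℕ => 2 * n + 1) := fun a b h => by simp only at h; omega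
    have hli2 : LinearIndependent ℂ (fun n : ℕ => e (2 * n + 1)) := hli.comp _ hodd
    set v : ℕ → LinearMap.ker U.toLinearMap := fun n =>
      ⟨e (2 * n + 1), by rw [LinearMap.mem_ker]; exact hU2 n⟩ with hv
    have hliv : LinearIndependent ℂ v := by
      apply LinearIndependent.of_comp (LinearMap.ker U.toLinearMap).subtype
      exact hli2
    have hfin : Finite ℕ := hliv.finite_of_isNoetherian
    exact not_finite ℕ
  · -- K compact
    refine ⟨(fun t : ℂ => t • (-(e 1))) '' Metric.closedBall 0 1, ?_, ?_⟩
    · exact (isCompact_closedBall 0 1).image (continuous_id.smul continuous_const)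
    · apply Filter.mem_of_superset (Metric.closedBall_mem_nhds 0 one_pos)
      intro x hx
      refine ⟨x 2, ?_, (hKform x).symm⟩
      rw [Metric.mem_closedBall, dist_zero_right] at hx ⊢
      calc ‖x 2‖ ≤ ‖x‖ := lp.norm_apply_le_norm (by norm_num) x 2
        _ ≤ 1 := hx
  · -- U + K not surjective
    intro hs
    obtain ⟨x, hx⟩ := hs (e 1)
    exact hnr ⟨x, hx⟩

end
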